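/- (Laguerre–Samuelson inequality) Let $P$ be a monic real polynomial of degree $n \ge 2$ all of whose roots are real, with $P(x) = x^n - b_1 x^{n-1} + b_2 x^{n-2} - \cdots$. Then every root $x$ of $P$ satisfies $\frac{1}{n}\Big[b_1 - (n-1)\sqrt{b_1^2 - \tfrac{2n}{n-1} b_2}\Big] \le x \le \frac{1}{n}\Big[b_1 + (n-1)\sqrt{b_1^2 - \tfrac{2n}{n-1} b_2}\Big]$, equivalently $\tfrac{1}{n}\big[b_1 \pm \sqrt{(n-1)^2 b_1^2 - 2(n-1)n\, b_2}\,\big]$ bound all roots. -/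

import Mathlib

open Finset

/-- Laguerre–Samuelson: If `x₁, …, xₙ` (`n ≥ 2`) are the (real)
roots of a monic polynomial with `b₁ = ∑ xᵢ` and `b₂ = ∑_{i<j} xᵢxⱼ`, then every
root lies in `[ (b₁ - √((n-1)²b₁² - 2(n-1)n b₂))/n , (b₁ + √(…))/n ]`. -/
theorem stmt14 (n : ℕ) (hn : 2 ≤ n) (x : Fin n → ℝ)
    (b1 b2 : ℝ) (hb1 : b1 = ∑ i : Fin n, x i)
    (hb2 : b2 = ∑ i : Fin n, ∑ j : Fin n, if i < j then x i * x j else 0) :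
    ∀ k : Fin n,
      (b1 - Real.sqrt ((n - 1) ^ 2 * b1 ^ 2 - 2 * (n - 1) * n * b2)) / n ≤ x k ∧
      x k ≤ (b1 + Real.sqrt ((n - 1) ^ 2 * b1 ^ 2 - 2 * (n - 1) * n * b2)) / n := by
  intro k
  have hn0 : (0:ℝ) < n := by positivity
  -- identity : b1^2 = ∑ x i ^2 + 2 b2
  have hid : b1 ^ 2 = (∑ i : Fin n, x i ^ 2) + 2 * b2 := by
    have h1 : b1 ^ 2 = ∑ i : Fin n, ∑ j : Fin n, x i * x j := by
      rw [hb1, sq, Finset.sum_mul_sum]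
    have h2 : ∀ i j : Fin n, x i * x j =
        (if i < j then x i * x j else 0) + (if j < i then x j * x i else 0) +
          (if j = i then x i * x i else 0) := by
      intro i j
      rcases lt_trichotomy i j with h | h | h
      · simp [h, not_lt.mpr h.le, h.ne']
      · simp [h, lt_irrefl]
      · simp [h, not_lt.mpr h.le, h.ne, mul_comm]
    calc b1 ^ 2 = ∑ i : Fin n, ∑ j : Fin n, ((if i < j then x i * x j else 0)
          + (if j < i then x j * x i else 0) + (if j = i then x i * x i else 0)) := by
          rw [h1]; exact Finset.sum_congr rfl fun i _ => Finset.sum_congr rfl fun j _ => h2 i j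
      _ = b2 + b2 + ∑ i : Fin n, x i * x i := by
          simp only [Finset.sum_add_distrib]
          congr 1
          · congr 1
            · rw [hb2]
            · rw [hb2, Finset.sum_comm]
          · simp
      _ = (∑ i : Fin n, x i ^ 2) + 2 * b2 := by
          simp only [sq]; ring
  -- Cauchy–Schwarz on erase k
  have hcs : (∑ i ∈ univ.erase k, x i) ^ 2 ≤ ((n:ℝ) - 1) * ∑ i ∈ univ.erase k, x i ^ 2 := by
    have := sq_sum_le_card_mul_sum_sq (s := univ.erase k) (f := x)
    have hcard : (#(univ.erase k) : ℝ) = (n:ℝ) - 1 := by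
      rw [Finset.card_erase_of_mem (mem_univ k), Finset.card_univ, Fintype.card_fin]
      have : 1 ≤ n := by omega
      push_cast [Nat.cast_sub this]
      ring
    rwa [hcard] at this
  have hsum1 : ∑ i ∈ univ.erase k, x i = b1 - x k := by
    rw [hb1, ← Finset.add_sum_erase _ _ (mem_univ k)]; ring
  have hsum2 : ∑ i ∈ univ.erase k, x i ^ 2 = (b1 ^ 2 - 2 * b2) - x k ^ 2 := by
    have := Finset.add_sum_erase univ (fun i => x i ^ 2) (mem_univ k)
    rw [hid]; linarith [this]
  set D : ℝ := (n - 1) ^ 2 * b1 ^ 2 - 2 * (n - 1) * n * b2 with hD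
  have hkey : ((n:ℝ) * x k - b1) ^ 2 ≤ D := by
    rw [hsum1, hsum2] at hcs
    nlinarith [hcs]
  have hD0 : 0 ≤ D := le_trans (sq_nonneg _) hkey
  have habs : |(n:ℝ) * x k - b1| ≤ Real.sqrt D := by
    rw [← Real.sqrt_sq_eq_abs]
    exact Real.sqrt_le_sqrt hkey
  rw [abs_le] at habs
  constructor
  · rw [div_le_iff₀ hn0]
    nlinarith [habs.1]
  · rw [le_div_iff₀ hn0]
    nlinarith [habs.2]
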